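/- Let T ⊆ T' be rooted normal trees in a graph G with the same root, where T' is normal in G. Then for every connected component D of G − T, the intersection of D with T' induces a connected subgraph. -/

import Mathlib

open Set

namespace NST

variable {V : Type*}

/-- A ray (one-way infinite path) in `G`, given by its vertex sequence. -/
def IsRay (G : SimpleGraph V) (f : ℕ → V) : Prop :=
  Function.Injective f ∧ ∀ n, G.Adj (f n) (f (n + 1))

/-- `S` separates `A` from `B` in `G`: every walk from `A` to `B` meets `S`. -/
def Separates (G : SimpleGraph V) (S A B : Set V) : Prop :=
  ∀ a ∈ A, ∀ b ∈ B, ∀ p : G.Walk a b, ∃ s ∈ S, s ∈ p.support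

/-- `U` is dispersed in `G`: every ray can be separated from `U` by a finite
vertex set (separating `U` from a tail of the ray). -/
def Dispersed (G : SimpleGraph V) (U : Set V) : Prop :=
  ∀ f : ℕ → V, IsRay G f →
    ∃ S : Set V, S.Finite ∧ ∃ N : ℕ, Separates G S U (f '' {n | N ≤ n})

/-- A subdivision of the countably infinite complete graph `K^{ℵ₀}` inside `G`:
countably many branch vertices, pairwise joined by internally disjoint paths. -/
structure KSubdivision (G : SimpleGraph V) where
  branch : ℕ → V
  inj : Function.Injective branch
  path : ∀ i j : ℕ, i < j → G.Walk (branch i) (branch j)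
  isPath : ∀ i j (h : i < j), (path i j h).IsPath
  internallyDisjoint : ∀ i j (h : i < j), ∀ i' j' (h' : i' < j'), (i, j) ≠ (i', j') →
    ∀ v, v ∈ (path i j h).support → v ∈ (path i' j' h').support →
      (v = branch i ∨ v = branch j) ∧ (v = branch i' ∨ v = branch j')

/-- The vertex set of a subdivided `K^{ℵ₀}`. -/
def KSubdivision.verts {G : SimpleGraph V} (K : KSubdivision G) : Set V :=
  ⋃ (i : ℕ) (j : ℕ) (h : i < j), {v | v ∈ (K.path i j h).support}

/-- `U` is `TK^{ℵ₀}`-dispersed in `G`: every subdivided infinite clique in `G`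
can be separated from `U` by a finite vertex set. -/
def TKDispersed (G : SimpleGraph V) (U : Set V) : Prop :=
  ∀ K : KSubdivision G, ∃ S : Set V, S.Finite ∧ Separates G S U K.verts

/-- Tree-order of a (spanning) tree `T` on `V` with root `r`:
`u ≤ v` iff `u` lies on every (equivalently, the unique) `r`–`v` path in `T`. -/
def TreeLE (T : SimpleGraph V) (r u v : V) : Prop :=
  ∀ p : T.Walk r v, p.IsPath → u ∈ p.support

/-- `T` is a normal spanning tree of `G` with root `r`. -/
def IsNormalSpanningTree (G T : SimpleGraph V) (r : V) : Prop :=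
  T ≤ G ∧ T.IsTree ∧ ∀ u v : V, G.Adj u v → TreeLE T r u v ∨ TreeLE T r v u

/-- `G` has a normal spanning tree. -/
def HasNST (G : SimpleGraph V) : Prop :=
  ∃ (T : SimpleGraph V) (r : V), IsNormalSpanningTree G T r

/-- Tree-order for a rooted tree given as a subgraph `T ⊆ G`. -/
def SubTreeLE (G : SimpleGraph V) (T : G.Subgraph) (r u v : V) : Prop :=
  ∃ (hr : r ∈ T.verts) (hu : u ∈ T.verts) (hv : v ∈ T.verts),
    ∀ p : T.coe.Walk ⟨r, hr⟩ ⟨v, hv⟩, p.IsPath → ⟨u, hu⟩ ∈ p.support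

/-- `p` is a `T`-path in `G`: a nontrivial path with both ends in `T` but all
edges and inner vertices outside `T`. -/
def IsTPath (G : SimpleGraph V) (T : G.Subgraph) {u v : V} (p : G.Walk u v) : Prop :=
  p.IsPath ∧ 0 < p.length ∧ u ∈ T.verts ∧ v ∈ T.verts ∧
    (∀ w ∈ p.support, w ≠ u → w ≠ v → w ∉ T.verts) ∧
    ∀ e ∈ p.edges, e ∉ T.edgeSet

/-- `T` is a normal rooted tree in `G` with root `r`: it is a tree containing `r`,
and the endvertices of every `T`-path in `G` are comparable in its tree-order. -/
def IsNormalTree (G : SimpleGraph V) (T : G.Subgraph) (r : V) : Prop :=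
  T.coe.IsTree ∧ r ∈ T.verts ∧
    ∀ (u v : V) (p : G.Walk u v), IsTPath G T p →
      SubTreeLE G T r u v ∨ SubTreeLE G T r v u

/-- `D` is (the vertex set of) a connected component of the subgraph of `G`
induced on `A`: a maximal subset of `A` inducing a connected subgraph. -/
def IsComponentOf (G : SimpleGraph V) (A D : Set V) : Prop :=
  D ⊆ A ∧ D.Nonempty ∧ (G.induce D).Connected ∧
    ∀ D' : Set V, D ⊆ D' → D' ⊆ A → (G.induce D').Connected → D' = D

/-- The neighbourhood `N(D)` of a set `D` in (the vertex set of) `T`. -/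
def NbhdIn (G : SimpleGraph V) (T : G.Subgraph) (D : Set V) : Set V :=
  {x ∈ T.verts | ∃ d ∈ D, G.Adj x d}

/-- The subgraph `T` of `G` is rayless: it contains no one-way infinite path. -/
def Rayless {W : Type*} {G : SimpleGraph W} (T : G.Subgraph) : Prop :=
  ¬ ∃ f : ℕ → W, Function.Injective f ∧ ∀ n, T.Adj (f n) (f (n + 1))

/-- `x` dominates the ray `f` in `G`: no finite vertex set avoiding `x`
separates `x` from (a tail of) the ray. -/
def Dominates (G : SimpleGraph V) (f : ℕ → V) (x : V) : Prop :=
  ∀ S : Set V, S.Finite → x ∉ S →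
    ∃ (n : ℕ) (p : G.Walk x (f n)), ∀ s ∈ S, s ∉ p.support

end NST

open NST SimpleGraph

section Helpers

open SimpleGraph

variable {V : Type*} {G : SimpleGraph V}

lemma reach_of_walk {A : Set V} {u v : V} (hu : u ∈ A) (hv : v ∈ A) (p : G.Walk u v)
    (hp : ∀ w ∈ p.support, w ∈ A) :
    (G.induce A).Reachable ⟨u, hu⟩ ⟨v, hv⟩ := by
  induction p with
  | nil => exact Reachable.refl _
  | @cons a b c h p ih =>
    have hb : b ∈ A := hp b (by simp)
    have hadj : (G.induce A).Adj ⟨a, hu⟩ ⟨b, hb⟩ := by simpa using h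
    exact hadj.reachable.trans (ih hb hv (fun w hw => hp w (by simp [hw])))

lemma walk_of_reach {A : Set V} {a b : ↥A} (h : (G.induce A).Reachable a b) :
    ∃ p : G.Walk ↑a ↑b, ∀ w ∈ p.support, w ∈ A := by
  obtain ⟨p⟩ := h
  induction p with
  | nil =>
    exact ⟨Walk.nil, fun w hw => by
      rw [Walk.support_nil, List.mem_singleton] at hw
      subst hw; exact Subtype.coe_prop _⟩
  | @cons a b c h p ih =>
    obtain ⟨q, hq⟩ := ih
    refine ⟨Walk.cons (by simpa using h) q, ?_⟩
    intro w hw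
    rw [Walk.support_cons, List.mem_cons] at hw
    rcases hw with rfl | hw
    · exact a.2
    · exact hq w hw

/-- Every vertex of a walk starting in a component `D` of `G - T` and avoiding `T`
lies in `D`. -/
lemma supp_sub_comp {T : SimpleGraph.Subgraph G} {D : Set V}
    (hD : IsComponentOf G T.vertsᶜ D) {u v : V} (Q : G.Walk u v) (hu : u ∈ D)
    (hQ : ∀ x ∈ Q.support, x ∉ T.verts) : ∀ x ∈ Q.support, x ∈ D := by
  classical
  set D' : Set V := D ∪ {x | x ∈ Q.support} with hD'def
  have hDD' : D ⊆ D' := Set.subset_union_left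
  have hsub : D' ⊆ T.vertsᶜ := Set.union_subset hD.1 (fun x hx => hQ x hx)
  have hreach : ∀ c, ∀ hc : c ∈ D', (G.induce D').Reachable ⟨c, hc⟩ ⟨u, hDD' hu⟩ := by
    intro c hc
    rcases hc with hcD | hcQ
    · obtain ⟨p, hp⟩ := walk_of_reach (hD.2.2.1.preconnected ⟨c, hcD⟩ ⟨u, hu⟩)
      exact reach_of_walk _ _ p (fun w hw => hDD' (hp w hw))
    · have hsupp : ∀ w ∈ (Q.takeUntil c hcQ).support, w ∈ D' :=
        fun w hw => Or.inr (Q.support_takeUntil_subset hcQ hw)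
      exact (reach_of_walk (hDD' hu) (Or.inr hcQ) (Q.takeUntil c hcQ) hsupp).symm
  have hconn : (G.induce D').Connected := by
    rw [connected_iff]
    refine ⟨fun a b => ?_, ⟨⟨u, hDD' hu⟩⟩⟩
    rcases a with ⟨a, ha⟩; rcases b with ⟨b, hb⟩
    exact (hreach a ha).trans (hreach b hb).symm
  have heq : D' = D := hD.2.2.2 D' hDD' hsub hconn
  intro x hx
  have hx' : x ∈ D' := Or.inr hx
  rwa [heq] at hx'

/-- If `u ≤ v` in the tree order of the normal tree `T'`, with `u, v` in a component
`D` of `G - T` where `T ⊆ T'` is a subtree containing the root, then `u` and `v`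
are connected within `D ∩ V(T')`. -/
lemma connect_comparable {T T' : SimpleGraph.Subgraph G} {r : V}
    (hTT' : T ≤ T') (hTtree : T.coe.IsTree) (hrT : r ∈ T.verts)
    (hT'tree : T'.coe.IsTree) {D : Set V} (hD : IsComponentOf G T.vertsᶜ D)
    {u v : V} (hu : u ∈ D) (hv : v ∈ D) (huT' : u ∈ T'.verts) (hvT' : v ∈ T'.verts)
    (hle : SubTreeLE G T' r u v) :
    (G.induce (D ∩ T'.verts)).Reachable ⟨u, hu, huT'⟩ ⟨v, hv, hvT'⟩ := by
  classical
  obtain ⟨q0⟩ := hT'tree.isConnected.preconnected ⟨u, huT'⟩ ⟨v, hvT'⟩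
  set q : T'.coe.Walk ⟨u, huT'⟩ ⟨v, hvT'⟩ := q0.bypass with hqdef
  have hqp : q.IsPath := q0.bypass_isPath
  have claim : ∀ w ∈ q.support, (↑w : V) ∉ T.verts := by
    intro w hw hwT
    obtain ⟨W0⟩ := hTtree.isConnected.preconnected ⟨r, hrT⟩ ⟨↑w, hwT⟩
    obtain ⟨hr', hu', hv', hP⟩ := hle
    have hmem3 : (⟨u, hu'⟩ : T'.verts) ∈
        ((W0.map (SimpleGraph.Subgraph.inclusion hTT')).append (q.dropUntil w hw)).support :=
      Walk.support_bypass_subset _ (hP _ (Walk.bypass_isPath _))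
    replace hmem3 := (Walk.mem_support_append_iff _ _).mp hmem3
    have huT : u ∉ T.verts := hD.1 hu
    rcases hmem3 with h1 | h2
    · have h1' : ∃ z ∈ W0.support, (SimpleGraph.Subgraph.inclusion hTT') z = ⟨u, hu'⟩ := by
        rw [Walk.support_map] at h1
        simpa using h1
      obtain ⟨z, _, hz⟩ := h1'
      apply huT
      have hzu : (z : V) = u := congrArg Subtype.val hz
      rw [← hzu]; exact z.2
    · -- u occurs in the part of q from w on
      have hnodup := hqp.support_nodup
      have hsplit := q.take_spec hw
      have hsupp_eq : q.support
          = (q.takeUntil w hw).support ++ (q.dropUntil w hw).support.tail := by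
        conv_lhs => rw [← hsplit]
        exact Walk.support_append _ _
      rw [hsupp_eq] at hnodup
      have hdisj := List.disjoint_of_nodup_append hnodup
      have hu_take : (⟨u, hu'⟩ : T'.verts) ∈ (q.takeUntil w hw).support :=
        Walk.start_mem_support _
      have hcons : (q.dropUntil w hw).support = w :: (q.dropUntil w hw).support.tail :=
        Walk.support_eq_cons _
      replace h2 : (⟨u, hu'⟩ : T'.verts) ∈ (q.dropUntil w hw).support := h2
      rw [hcons, List.mem_cons] at h2
      rcases h2 with h2 | h2
      · apply huT
        have hwu : (w : V) = u := (congrArg Subtype.val h2).symm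
        rw [← hwu]; exact hwT
      · exact hdisj hu_take h2
  -- now project q down to G
  have hQ : ∃ Q : G.Walk u v, ∀ x ∈ Q.support, x ∉ T.verts ∧ x ∈ T'.verts := by
    refine ⟨q.map T'.hom, ?_⟩
    intro x hx
    replace hx : x ∈ q.support.map T'.hom := (Walk.support_map (f := T'.hom) (p := q)) ▸ hx
    obtain ⟨z, hz, rfl⟩ := List.mem_map.mp hx
    exact ⟨claim z hz, z.2⟩
  obtain ⟨Q, hQ⟩ := hQ
  have hQD : ∀ x ∈ Q.support, x ∈ D :=
    supp_sub_comp hD Q hu (fun x hx => (hQ x hx).1)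
  exact reach_of_walk _ _ Q (fun x hx => ⟨hQD x hx, (hQ x hx).2⟩)

lemma aux_walk {T T' : SimpleGraph.Subgraph G} {r : V}
    (hTT' : T ≤ T') (hTtree : T.coe.IsTree) (hrT : r ∈ T.verts)
    (hT' : IsNormalTree G T' r) {D : Set V} (hD : IsComponentOf G T.vertsᶜ D) :
    ∀ n : ℕ, ∀ {a y x : V} (P : G.Walk a y) (q : G.Walk x a),
      P.length ≤ n → (q.append P).IsPath → (∀ w ∈ (q.append P).support, w ∈ D) →
      (∀ w ∈ q.support, w ≠ x → w ∉ T'.verts) → (∀ e ∈ q.edges, e ∉ T'.edgeSet) →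
      ∀ (hx : x ∈ D ∩ T'.verts) (hy : y ∈ D ∩ T'.verts),
      (G.induce (D ∩ T'.verts)).Reachable ⟨x, hx⟩ ⟨y, hy⟩ := by
  classical
  intro n
  induction n with
  | zero =>
    intro a y x P q hlen hpath hsupp hqT' hqE hx hy
    have h0 : P.length = 0 := Nat.le_zero.mp hlen
    cases P with
    | nil =>
      by_cases hxy : x = a
      · subst hxy; exact Reachable.refl _
      · exact absurd hy.2 (hqT' a (Walk.end_mem_support q) (fun e => hxy e.symm))
    | cons h P' => simp at h0
  | succ n ih =>
    intro a y x P q hlen hpath hsupp hqT' hqE hx hy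
    cases P with
    | nil =>
      by_cases hxy : x = a
      · subst hxy; exact Reachable.refl _
      · exact absurd hy.2 (hqT' a (Walk.end_mem_support q) (fun e => hxy e.symm))
    | @cons _ b _ h P' =>
      have hassoc : (q.append (Walk.cons h Walk.nil)).append P' = q.append (Walk.cons h P') := by
        rw [← Walk.append_assoc, Walk.cons_append, Walk.nil_append]
      have hbD : b ∈ D := by
        apply hsupp
        rw [Walk.mem_support_append_iff]
        exact Or.inr (by simp)
      have hP'path : P'.IsPath := (hpath.of_append_right).of_cons
      have hP'len : P'.length ≤ n := by
        have hl : (Walk.cons h P').length = P'.length + 1 := by simp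
        omega
      by_cases hbT' : b ∈ T'.verts
      · -- flush: connect x to b, then recurse from b with empty pending walk
        have hb : b ∈ D ∩ T'.verts := ⟨hbD, hbT'⟩
        have reach1 : (G.induce (D ∩ T'.verts)).Reachable ⟨x, hx⟩ ⟨b, hb⟩ := by
          cases q with
          | nil =>
            have hadj : (G.induce (D ∩ T'.verts)).Adj ⟨a, hx⟩ ⟨b, hb⟩ := by simpa using h
            exact hadj.reachable
          | cons h0 q0 =>
            rename_i c
            set q1 : G.Walk x a := Walk.cons h0 q0 with hq1def
            have hq'path : (q1.append (Walk.cons h Walk.nil)).IsPath :=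
              Walk.IsPath.of_append_left (by rw [hassoc]; exact hpath)
            have hq1path : q1.IsPath := Walk.IsPath.of_append_left hq'path
            have hxa : x ≠ a := by
              intro e
              subst e
              rw [Walk.isPath_iff_eq_nil] at hq1path
              simp [hq1def] at hq1path
            have haT' : a ∉ T'.verts :=
              hqT' a (Walk.end_mem_support _) (fun e => hxa e.symm)
            have htp : IsTPath G T' (q1.append (Walk.cons h Walk.nil)) := by
              refine ⟨hq'path, by simp, hx.2, hbT', ?_, ?_⟩
              · intro w hw hwx hwb
                rw [Walk.mem_support_append_iff] at hw
                rcases hw with hw | hw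
                · exact hqT' w hw hwx
                · simp at hw
                  rcases hw with rfl | rfl
                  · exact haT'
                  · exact absurd rfl hwb
              · intro e he
                rw [Walk.edges_append] at he
                rcases List.mem_append.mp he with he | he
                · exact hqE e he
                · simp at he
                  subst he
                  intro hmem
                  rw [SimpleGraph.Subgraph.mem_edgeSet] at hmem
                  exact haT' hmem.fst_mem
            rcases hT'.2.2 x b (q1.append (Walk.cons h Walk.nil)) htp with hle | hle
            · exact connect_comparable hTT' hTtree hrT hT'.1 hD hx.1 hbD hx.2 hbT' hle
            · exact (connect_comparable hTT' hTtree hrT hT'.1 hD hbD hx.1 hbT' hx.2 hle).symm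
        have reach2 : (G.induce (D ∩ T'.verts)).Reachable ⟨b, hb⟩ ⟨y, hy⟩ := by
          refine ih P' (Walk.nil) hP'len ?_ ?_ ?_ ?_ hb hy
          · simpa using hP'path
          · intro w hw
            apply hsupp
            rw [Walk.mem_support_append_iff]
            refine Or.inr ?_
            rw [Walk.support_cons, List.mem_cons]
            exact Or.inr (by simpa using hw)
          · intro w hw hwb; simp at hw; exact absurd hw hwb
          · intro e he; simp at he
        exact reach1.trans reach2
      · -- continue: extend pending walk by the edge a~b
        refine ih P' (q.append (Walk.cons h Walk.nil)) hP'len ?_ ?_ ?_ ?_ hx hy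
        · rw [hassoc]; exact hpath
        · intro w hw; rw [hassoc] at hw; exact hsupp w hw
        · intro w hw hwx
          rw [Walk.mem_support_append_iff] at hw
          rcases hw with hw | hw
          · exact hqT' w hw hwx
          · simp at hw
            rcases hw with rfl | rfl
            · exact hqT' w (Walk.end_mem_support _) hwx
            · exact hbT'
        · intro e he
          rw [Walk.edges_append] at he
          rcases List.mem_append.mp he with he | he
          · exact hqE e he
          · simp at he
            subst he
            intro hmem
            rw [SimpleGraph.Subgraph.mem_edgeSet] at hmem
            exact hbT' hmem.snd_mem

end Helpers

/-- If `T ⊆ T'` are rooted trees with common root and `T'` is normal in `G`,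
then for every component `D` of `G − T`, the set `D ∩ V(T')` spans a connected
(possibly empty) subgraph of `G`. -/
theorem stmt9 {V : Type*} (G : SimpleGraph V) (T T' : G.Subgraph) (r : V)
    (hTT' : T ≤ T') (hTtree : T.coe.IsTree) (hrT : r ∈ T.verts)
    (hT' : IsNormalTree G T' r)
    (D : Set V) (hD : IsComponentOf G T.vertsᶜ D) :
    (G.induce (D ∩ T'.verts)).Preconnected := by
  classical
  rintro ⟨x, hxD, hxT'⟩ ⟨y, hyD, hyT'⟩
  obtain ⟨P0, hP0⟩ := walk_of_reach (hD.2.2.1.preconnected ⟨x, hxD⟩ ⟨y, hyD⟩)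
  have key := aux_walk hTT' hTtree hrT hT' hD P0.bypass.length P0.bypass (Walk.nil) le_rfl
    (by simpa using P0.bypass_isPath)
    (by intro w hw
        simp only [SimpleGraph.Walk.nil_append] at hw
        exact hP0 w (SimpleGraph.Walk.support_bypass_subset _ hw))
    (by intro w hw hwx; simp at hw; exact absurd hw hwx)
    (by intro e he; simp at he)
    ⟨hxD, hxT'⟩ ⟨hyD, hyT'⟩
  exact key
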